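/- arXiv:2112.11173 — 2 statements merged into one kernel-verified Lean document; each statement's English description precedes it below -/
import Mathlib

section
/- Let r > 0 and let g : [0, r] → ℝ be measurable with 0 ≤ g ≤ 1. Then (∫₀^r g(s) ds)² ≤ 2 ∫₀^r g(t)·t dt. -/
open MeasureTheory

open Set in
/-- One-dimensional slicing estimate: for measurable `0 ≤ g ≤ 1` on `[0,r]`,
`(∫₀^r g)² ≤ 2 ∫₀^r g(t)·t dt`. -/
theorem stmt_4 (r : ℝ) (hr : 0 < r) (g : ℝ → ℝ) (hg : Measurable g)
    (hg0 : ∀ s ∈ Set.Icc 0 r, 0 ≤ g s) (hg1 : ∀ s ∈ Set.Icc 0 r, g s ≤ 1) :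
    (∫ s in (0:ℝ)..r, g s) ^ 2 ≤ 2 * ∫ t in (0:ℝ)..r, g t * t := by
  have hr' : (0:ℝ) ≤ r := hr.le
  have hIoc : ∀ x ∈ Ioc (0:ℝ) r, x ∈ Icc (0:ℝ) r := fun x hx => Ioc_subset_Icc_self hx
  rw [intervalIntegral.integral_of_le hr', intervalIntegral.integral_of_le hr']
  set μ := volume.restrict (Ioc (0:ℝ) r) with hμdef
  haveI : IsFiniteMeasure μ := by
    constructor
    rw [hμdef, Measure.restrict_apply_univ]
    simp [Real.volume_Ioc]
  -- integrability of g
  have hg1' : ∀ᵐ t ∂μ, ‖g t‖ ≤ 1 := by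
    rw [hμdef, ae_restrict_iff' measurableSet_Ioc]
    filter_upwards with t ht
    rw [Real.norm_eq_abs, abs_le]
    exact ⟨by linarith [hg0 t (hIoc t ht)], hg1 t (hIoc t ht)⟩
  have hgi : Integrable g μ :=
    Integrable.mono' (integrable_const 1) hg.aestronglyMeasurable hg1'
  -- the kernel F
  set F : ℝ × ℝ → ℝ := fun p => if p.1 < p.2 then g p.2 else 0 with hFdef
  have hFm : Measurable F :=
    Measurable.ite (measurableSet_lt measurable_fst measurable_snd)
      (hg.comp measurable_snd) measurable_const
  have hprod : μ.prod μ = (volume.prod volume).restrict (Ioc (0:ℝ) r ×ˢ Ioc (0:ℝ) r) :=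
    Measure.prod_restrict _ _
  have hFb : ∀ᵐ p ∂(μ.prod μ), ‖F p‖ ≤ 1 := by
    rw [hprod, ae_restrict_iff' (measurableSet_Ioc.prod measurableSet_Ioc)]
    filter_upwards with p hp
    simp only [hFdef]
    split_ifs
    · rw [Real.norm_eq_abs, abs_le]
      exact ⟨by linarith [hg0 p.2 (hIoc _ hp.2)], hg1 p.2 (hIoc _ hp.2)⟩
    · simp
  have hFi : Integrable F (μ.prod μ) :=
    Integrable.mono' (integrable_const 1) hFm.aestronglyMeasurable hFb
  -- Fubini
  have hswap : ∫ s, ∫ t, F (s, t) ∂μ ∂μ = ∫ t, ∫ s, F (s, t) ∂μ ∂μ :=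
    integral_integral_swap hFi
  -- inner integral in t, for fixed s ∈ Ioc 0 r
  have hinner_t : ∀ s ∈ Ioc (0:ℝ) r, ∫ t, F (s, t) ∂μ = ∫ t in Ioc s r, g t := by
    intro s hs
    have h1 : (fun t => F (s, t)) = (Ioi s).indicator g := by
      ext t
      simp [hFdef, indicator_apply, mem_Ioi]
    rw [h1, hμdef, integral_indicator measurableSet_Ioi,
      Measure.restrict_restrict measurableSet_Ioi]
    have h2 : Ioi s ∩ Ioc (0:ℝ) r = Ioc s r := by
      ext x
      simp only [mem_inter_iff, mem_Ioi, mem_Ioc]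
      constructor
      · rintro ⟨ha, _, hc⟩; exact ⟨ha, hc⟩
      · rintro ⟨ha, hb⟩; exact ⟨ha, hs.1.trans ha, hb⟩
    rw [h2]
  -- inner integral in s, for fixed t ∈ Ioc 0 r
  have hinner_s : ∀ t ∈ Ioc (0:ℝ) r, ∫ s, F (s, t) ∂μ = g t * t := by
    intro t ht
    have h1 : (fun s => F (s, t)) = (Iio t).indicator (fun _ => g t) := by
      ext s
      simp [hFdef, indicator_apply, mem_Iio]
    rw [h1, integral_indicator measurableSet_Iio, setIntegral_const, hμdef,
      measureReal_restrict_apply measurableSet_Iio]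
    have h2 : Iio t ∩ Ioc (0:ℝ) r = Ioo 0 t := by
      ext x
      simp only [mem_inter_iff, mem_Iio, mem_Ioc, mem_Ioo]
      constructor
      · rintro ⟨hx, hx0, _⟩; exact ⟨hx0, hx⟩
      · rintro ⟨hx0, hx⟩; exact ⟨hx, hx0, hx.le.trans ht.2⟩
    rw [h2, Real.volume_real_Ioo_of_le (by linarith [ht.1])]
    rw [smul_eq_mul, mul_comm, sub_zero]
  have hgOn : IntegrableOn g (Ioc (0:ℝ) r) volume := hgi
  set A := ∫ t, g t ∂μ with hA
  have hA2 : A ^ 2 = ∫ s, g s * A ∂μ := by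
    rw [integral_mul_const, sq]
  have hgt_i : Integrable (fun s => g s * s) μ := by
    refine Integrable.mono' (integrable_const r) ((hg.mul measurable_id).aestronglyMeasurable) ?_
    rw [hμdef, ae_restrict_iff' measurableSet_Ioc]
    filter_upwards with s hs
    rw [Real.norm_eq_abs, abs_mul, abs_of_nonneg (hg0 s (hIoc s hs)), abs_of_nonneg hs.1.le]
    calc g s * s ≤ s := mul_le_of_le_one_left hs.1.le (hg1 s (hIoc s hs))
      _ ≤ r := hs.2
  have hFint_s : Integrable (fun s => ∫ t, F (s, t) ∂μ) μ := hFi.integral_prod_left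
  have hpt : ∀ s ∈ Ioc (0:ℝ) r, g s * A ≤ g s * s + ∫ t, F (s, t) ∂μ := by
    intro s hs
    have hsplit : A = (∫ t in Ioc (0:ℝ) s, g t) + ∫ t in Ioc s r, g t := by
      rw [hA, hμdef, ← Ioc_union_Ioc_eq_Ioc hs.1.le hs.2,
        setIntegral_union (Ioc_disjoint_Ioc_of_le le_rfl) measurableSet_Ioc
          (hgOn.mono_set (Ioc_subset_Ioc_right hs.2))
          (hgOn.mono_set (Ioc_subset_Ioc_left hs.1.le))]
    have h1 : (∫ t in Ioc (0:ℝ) s, g t) ≤ s := by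
      calc ∫ t in Ioc (0:ℝ) s, g t ≤ ∫ _ in Ioc (0:ℝ) s, (1:ℝ) := by
            refine setIntegral_mono_on (hgOn.mono_set (Ioc_subset_Ioc_right hs.2))
              (integrableOn_const (by simp [Real.volume_Ioc])) measurableSet_Ioc ?_
            intro t ht; exact hg1 t ⟨ht.1.le, ht.2.trans hs.2⟩
        _ = s := by
            rw [setIntegral_const, Real.volume_real_Ioc_of_le hs.1.le, smul_eq_mul, mul_one]
            ring
    have h2 : (0:ℝ) ≤ ∫ t in Ioc s r, g t :=
      setIntegral_nonneg measurableSet_Ioc (fun t ht => hg0 t ⟨(hs.1.trans ht.1).le, ht.2⟩)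
    rw [hsplit, mul_add, hinner_t s hs]
    exact add_le_add (mul_le_mul_of_nonneg_left h1 (hg0 s (hIoc s hs)))
      (mul_le_of_le_one_left h2 (hg1 s (hIoc s hs)))
  have hmono : ∫ s, g s * A ∂μ ≤ ∫ s, (g s * s + ∫ t, F (s, t) ∂μ) ∂μ :=
    setIntegral_mono_on (hgi.mul_const A) (hgt_i.add hFint_s) measurableSet_Ioc hpt
  have hsum : ∫ s, (g s * s + ∫ t, F (s, t) ∂μ) ∂μ
      = (∫ s, g s * s ∂μ) + ∫ s, ∫ t, F (s, t) ∂μ ∂μ := integral_add hgt_i hFint_s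
  have hRHS : ∫ s, ∫ t, F (s, t) ∂μ ∂μ = ∫ t, g t * t ∂μ := by
    rw [hswap]
    exact setIntegral_congr_fun measurableSet_Ioc hinner_s
  calc A ^ 2 = ∫ s, g s * A ∂μ := hA2
    _ ≤ ∫ s, (g s * s + ∫ t, F (s, t) ∂μ) ∂μ := hmono
    _ = (∫ s, g s * s ∂μ) + ∫ s, ∫ t, F (s, t) ∂μ ∂μ := hsum
    _ = 2 * ∫ t, g t * t ∂μ := by rw [hRHS]; ring
end

section
/- Let W : ℝ → [0, ∞) be continuous with W(1) = W(−1) = 0 and W > 0 on (−1, 1), and assume there is K > 0 with W(s) ≤ K·(1 − s)² for s ∈ [0, 1] and W(s) ≤ K·(1 + s)² for s ∈ [−1, 0]. Let θ : ℝ → ℝ be differentiable with θ(0) = 0 and θ'(t) = √(2·W(θ(t))) for all t ∈ ℝ. Then θ(t) ∈ (−1, 1) for all t ∈ ℝ, and θ is strictly increasing. -/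
/-- The optimal transition profile stays strictly between the wells and is
strictly increasing. -/
theorem stmt_15 (W : ℝ → ℝ) (hW : Continuous W) (hWnn : ∀ s, 0 ≤ W s)
    (hW1 : W 1 = 0) (hWm1 : W (-1) = 0)
    (hWpos : ∀ s ∈ Set.Ioo (-1:ℝ) 1, 0 < W s)
    (K : ℝ) (hK : 0 < K)
    (hWq1 : ∀ s ∈ Set.Icc (0:ℝ) 1, W s ≤ K * (1 - s) ^ 2)
    (hWqm1 : ∀ s ∈ Set.Icc (-1:ℝ) 0, W s ≤ K * (1 + s) ^ 2)
    (θ : ℝ → ℝ) (hθ0 : θ 0 = 0)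
    (hθ' : ∀ t : ℝ, HasDerivAt θ (Real.sqrt (2 * W (θ t))) t) :
    (∀ t : ℝ, θ t ∈ Set.Ioo (-1:ℝ) 1) ∧ StrictMono θ := by
  have hdiff : Differentiable ℝ θ := fun t => (hθ' t).differentiableAt
  have hmono : Monotone θ := by
    apply monotone_of_deriv_nonneg hdiff
    intro t
    rw [(hθ' t).deriv]
    exact Real.sqrt_nonneg _
  set c := Real.sqrt (2 * K) with hc
  have hc0 : 0 < c := Real.sqrt_pos.2 (by linarith)
  -- θ never equals 1
  have hne1 : ∀ T, θ T ≠ 1 := by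
    intro T hT
    have hT0 : 0 < T := by
      by_contra h
      push_neg at h
      have := hmono h
      rw [hθ0, hT] at this; linarith
    set g : ℝ → ℝ := fun t => (1 - θ t) * Real.exp (c * t) with hg
    have hgd : ∀ t, HasDerivAt g
        (Real.exp (c * t) * (c * (1 - θ t) - Real.sqrt (2 * W (θ t)))) t := by
      intro t
      have h1 : HasDerivAt (fun t => 1 - θ t) (-(Real.sqrt (2 * W (θ t)))) t := by
        have := (hasDerivAt_const t (1:ℝ)).sub (hθ' t)
        rw [zero_sub] at this
        exact this
      have h2 : HasDerivAt (fun t : ℝ => Real.exp (c * t)) (Real.exp (c * t) * c) t := by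
        convert ((hasDerivAt_id t).const_mul c).exp using 1 <;> simp
      have := h1.mul h2
      exact this.congr_deriv (by ring)
    have hgm : MonotoneOn g (Set.Icc 0 T) := by
      have hgc : Continuous g := by
        rw [hg]; exact (continuous_const.sub hdiff.continuous).mul
          (Real.continuous_exp.comp (continuous_const.mul continuous_id))
      apply monotoneOn_of_deriv_nonneg (convex_Icc 0 T) hgc.continuousOn
        (fun x _ => (hgd x).differentiableAt.differentiableWithinAt)
      intro x hx
      rw [interior_Icc] at hx
      rw [(hgd x).deriv]
      have h1 : (0:ℝ) ≤ θ x := by rw [← hθ0]; exact hmono hx.1.le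
      have h2 : θ x ≤ 1 := by rw [← hT]; exact hmono hx.2.le
      have hb := hWq1 (θ x) ⟨h1, h2⟩
      have key : Real.sqrt (2 * W (θ x)) ≤ c * (1 - θ x) := by
        have : Real.sqrt (2 * W (θ x)) ≤ Real.sqrt ((2 * K) * (1 - θ x) ^ 2) :=
          Real.sqrt_le_sqrt (by nlinarith)
        rwa [Real.sqrt_mul (by linarith) ((1 - θ x) ^ 2),
          Real.sqrt_sq (by linarith)] at this
      exact mul_nonneg (Real.exp_pos _).le (by linarith)
    have hle := hgm (Set.left_mem_Icc.2 hT0.le) (Set.right_mem_Icc.2 hT0.le) hT0.le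
    have hg0 : g 0 = 1 := by simp [hg, hθ0]
    have hgT : g T = 0 := by simp [hg, hT]
    rw [hg0, hgT] at hle; linarith
  -- θ never equals -1
  have hnem1 : ∀ T, θ T ≠ -1 := by
    intro T hT
    have hT0 : T < 0 := by
      by_contra h
      push_neg at h
      have := hmono h
      rw [hθ0, hT] at this; linarith
    set g : ℝ → ℝ := fun t => (1 + θ t) * Real.exp (-(c * t)) with hg
    have hgd : ∀ t, HasDerivAt g
        (Real.exp (-(c * t)) * (Real.sqrt (2 * W (θ t)) - c * (1 + θ t))) t := by
      intro t
      have h1 : HasDerivAt (fun t => 1 + θ t) (Real.sqrt (2 * W (θ t))) t := by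
        have := (hasDerivAt_const t (1:ℝ)).add (hθ' t)
        rw [zero_add] at this
        exact this
      have h2 : HasDerivAt (fun t : ℝ => Real.exp (-(c * t))) (Real.exp (-(c * t)) * (-c)) t := by
        convert (((hasDerivAt_id t).const_mul c).neg).exp using 1 <;> simp
      have := h1.mul h2
      exact this.congr_deriv (by ring)
    have hgm : AntitoneOn g (Set.Icc T 0) := by
      have hgc : Continuous g := by
        rw [hg]; exact (continuous_const.add hdiff.continuous).mul
          (Real.continuous_exp.comp (continuous_const.mul continuous_id).neg)
      apply antitoneOn_of_deriv_nonpos (convex_Icc T 0) hgc.continuousOn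
        (fun x _ => (hgd x).differentiableAt.differentiableWithinAt)
      intro x hx
      rw [interior_Icc] at hx
      rw [(hgd x).deriv]
      have h1 : θ x ≤ 0 := by rw [← hθ0]; exact hmono hx.2.le
      have h2 : -1 ≤ θ x := by rw [← hT]; exact hmono hx.1.le
      have hb := hWqm1 (θ x) ⟨h2, h1⟩
      have key : Real.sqrt (2 * W (θ x)) ≤ c * (1 + θ x) := by
        have : Real.sqrt (2 * W (θ x)) ≤ Real.sqrt ((2 * K) * (1 + θ x) ^ 2) :=
          Real.sqrt_le_sqrt (by nlinarith)
        rwa [Real.sqrt_mul (by linarith) ((1 + θ x) ^ 2),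
          Real.sqrt_sq (by linarith)] at this
      have : Real.sqrt (2 * W (θ x)) - c * (1 + θ x) ≤ 0 := by linarith
      exact mul_nonpos_of_nonneg_of_nonpos (Real.exp_pos _).le this
    have hle := hgm (Set.left_mem_Icc.2 hT0.le) (Set.right_mem_Icc.2 hT0.le) hT0.le
    have hg0 : g 0 = 1 := by simp [hg, hθ0]
    have hgT : g T = 0 := by simp [hg, hT]
    rw [hg0, hgT] at hle; linarith
  have hIoo : ∀ t, θ t ∈ Set.Ioo (-1:ℝ) 1 := by
    intro t
    constructor
    · by_contra h
      push_neg at h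
      rcases eq_or_lt_of_le h with h' | h'
      · exact hnem1 t h'
      · have ht0 : t ≤ 0 := by
          by_contra h2
          push_neg at h2
          have := hmono h2.le
          rw [hθ0] at this; linarith
        have hmem : (-1:ℝ) ∈ Set.Icc (θ t) (θ 0) := by
          rw [hθ0]; exact ⟨h, by norm_num⟩
        obtain ⟨T, _, hT⟩ := intermediate_value_Icc ht0 hdiff.continuous.continuousOn hmem
        exact hnem1 T hT
    · by_contra h
      push_neg at h
      rcases eq_or_lt_of_le h with h' | h'
      · exact hne1 t h'.symm
      · have ht0 : 0 ≤ t := by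
          by_contra h2
          push_neg at h2
          have := hmono h2.le
          rw [hθ0] at this; linarith
        have hmem : (1:ℝ) ∈ Set.Icc (θ 0) (θ t) := by
          rw [hθ0]; exact ⟨by norm_num, h⟩
        obtain ⟨T, _, hT⟩ := intermediate_value_Icc ht0 hdiff.continuous.continuousOn hmem
        exact hne1 T hT
  refine ⟨hIoo, ?_⟩
  intro a b hab
  rcases lt_or_eq_of_le (hmono hab.le) with h | heq
  · exact h
  · exfalso
    have hconst : ∀ t ∈ Set.Icc a b, θ t = θ a := by
      intro t ht
      have h1 := hmono ht.1
      have h2 := hmono ht.2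
      rw [← heq] at h2
      linarith
    set m := (a + b) / 2 with hm
    have hmIoo : m ∈ Set.Ioo a b := ⟨by simp [hm]; linarith, by simp [hm]; linarith⟩
    have hev : (fun _ => θ a) =ᶠ[nhds m] θ := by
      apply Filter.eventuallyEq_of_mem (Ioo_mem_nhds hmIoo.1 hmIoo.2)
      intro t ht
      exact (hconst t (Set.Ioo_subset_Icc_self ht)).symm
    have h0 : HasDerivAt θ 0 m := (hasDerivAt_const m (θ a)).congr_of_eventuallyEq hev.symm
    have huniq := h0.unique (hθ' m)
    have hW0 : W (θ m) = 0 := by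
      have := Real.sqrt_eq_zero'.1 huniq.symm
      have h2 := hWnn (θ m)
      linarith
    have := hWpos (θ m) (hIoo m)
    linarith
end
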